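/- arXiv:1907.01479 — 2 statements merged into one kernel-verified Lean document; each statement's English description precedes it below -/
import Mathlib

section
/- The N/2 two-sample shifts {ψ1[·−2l] : l = 0,…,N/2−1} of the first-level discrete-spline wavelet packet ψ1 of order 2r form an orthonormal system in Π[N]; moreover every shift ψ1[·−2l] is orthogonal to every shift ψ0[·−2p], so that the combined family {ψ0[·−2l]} ∪ {ψ1[·−2l]}, l = 0,…,N/2−1, is an orthonormal basis of the N-dimensional space Π[N]. -/
open Finset

noncomputable def omegaN (N : ℕ) : ℂ := Complex.exp (2 * Real.pi * Complex.I / N)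

noncomputable def U4r (N r : ℕ) (n : ℤ) : ℝ :=
  ((Real.cos (Real.pi * n / N)) ^ (4 * r) + (Real.sin (Real.pi * n / N)) ^ (4 * r)) / 2

noncomputable def betaF (N r : ℕ) (n : ℤ) : ℂ :=
  Complex.ofReal ((Real.cos (Real.pi * n / N)) ^ (2 * r) / Real.sqrt (U4r N r n))

noncomputable def alphaF (N r : ℕ) (n : ℤ) : ℂ :=
  omegaN N ^ n * Complex.ofReal ((Real.sin (Real.pi * n / N)) ^ (2 * r) / Real.sqrt (U4r N r n))

noncomputable def psi0 (N r : ℕ) (k : ℤ) : ℂ :=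
  (N : ℂ)⁻¹ * ∑ n ∈ Finset.range N, omegaN N ^ (k * (n : ℤ)) * betaF N r n

noncomputable def psi1 (N r : ℕ) (k : ℤ) : ℂ :=
  (N : ℂ)⁻¹ * ∑ n ∈ Finset.range N, omegaN N ^ (k * (n : ℤ)) * alphaF N r n

noncomputable def ip (N : ℕ) (x y : ℤ → ℂ) : ℂ :=
  ∑ k ∈ Finset.range N, x k * (starRingEnd ℂ) (y k)

lemma omega_zpow (N : ℕ) (s : ℤ) :
    omegaN N ^ s = Complex.exp (s * (2 * Real.pi * Complex.I / N)) :=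
  (Complex.exp_int_mul _ s).symm
lemma omega_mul (N : ℕ) (s t : ℤ) :
    omegaN N ^ s * omegaN N ^ t = omegaN N ^ (s + t) := by
  rw [omega_zpow, omega_zpow, omega_zpow, ← Complex.exp_add]; congr 1; push_cast; ring

lemma U4r_pos (N r : ℕ) (hN : N ≠ 0) (n : ℤ) : 0 < U4r N r n := by
  set c := Real.cos (Real.pi * n / N)
  set s := Real.sin (Real.pi * n / N)
  have hcs : s ^ 2 + c ^ 2 = 1 := Real.sin_sq_add_cos_sq _
  have h4 : ∀ x : ℝ, x ^ (4 * r) = (x ^ 2) ^ (2 * r) := by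
    intro x; rw [← pow_mul]; ring_nf
  unfold U4r
  rcases eq_or_ne c 0 with hc | hc
  · have hs : s ^ 2 = 1 := by rw [hc] at hcs; simpa using hcs
    rw [h4 s, h4 c, hs, one_pow]
    positivity
  · have : 0 < c ^ (4 * r) := by rw [h4]; positivity
    have h2 : 0 ≤ s ^ (4 * r) := by rw [h4]; positivity
    linarith

lemma sqrtU_sq (N r : ℕ) (hN : N ≠ 0) (n : ℤ) :
    Real.sqrt (U4r N r n) * Real.sqrt (U4r N r n) = U4r N r n :=
  Real.mul_self_sqrt (U4r_pos N r hN n).le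

-- the basic real identity: c^{2r}/√U * c^{2r}/√U + s^{2r}/√U * s^{2r}/√U = 2
lemma real_diag (N r : ℕ) (hN : N ≠ 0) (n : ℤ) :
    (Real.cos (Real.pi * n / N)) ^ (2 * r) / Real.sqrt (U4r N r n) *
      ((Real.cos (Real.pi * n / N)) ^ (2 * r) / Real.sqrt (U4r N r n)) +
    (Real.sin (Real.pi * n / N)) ^ (2 * r) / Real.sqrt (U4r N r n) *
      ((Real.sin (Real.pi * n / N)) ^ (2 * r) / Real.sqrt (U4r N r n)) = 2 := by
  have hU := U4r_pos N r hN n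
  have hs := sqrtU_sq N r hN n
  have h4 : ∀ x : ℝ, x ^ (2 * r) * x ^ (2 * r) = x ^ (4 * r) := by
    intro x; rw [← pow_add]; ring_nf
  rw [div_mul_div_comm, div_mul_div_comm, hs, ← add_div, h4, h4]
  rw [show (Real.cos (Real.pi * n / N)) ^ (4*r) + (Real.sin (Real.pi * n / N)) ^ (4*r)
      = 2 * U4r N r n by unfold U4r; ring]
  field_simp

-- shift lemmas
lemma arg_shift (N M : ℕ) (hNM : N = 2 * M) (hM : M ≠ 0) (n : ℤ) :
    Real.pi * (((n + (M:ℤ)) : ℤ) : ℝ) / N = Real.pi * n / N + Real.pi / 2 := by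
  have hN0 : (N : ℝ) ≠ 0 := by
    have : N ≠ 0 := by omega
    exact Nat.cast_ne_zero.mpr this
  have h2 : (N : ℝ) = 2 * M := by rw [hNM]; push_cast; ring
  have hM0 : (M : ℝ) ≠ 0 := Nat.cast_ne_zero.mpr hM
  push_cast
  rw [h2]
  field_simp

lemma arg_shift_N (N : ℕ) (hN : N ≠ 0) (n : ℤ) :
    Real.pi * (((n + (N:ℤ)) : ℤ) : ℝ) / N = Real.pi * n / N + Real.pi := by
  have hN0 : (N : ℝ) ≠ 0 := Nat.cast_ne_zero.mpr hN
  push_cast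
  field_simp

-- values at n + M
lemma U4r_shift (N M r : ℕ) (hNM : N = 2 * M) (hM : M ≠ 0) (n : ℤ) : U4r N r (n + (M:ℤ)) = U4r N r n := by
  unfold U4r
  rw [arg_shift N M hNM hM n, Real.cos_add_pi_div_two, Real.sin_add_pi_div_two]
  rw [Even.neg_pow ⟨2*r, by ring⟩]
  ring

lemma beta_shift (N M r : ℕ) (hNM : N = 2 * M) (hM : M ≠ 0) (n : ℤ) : betaF N r (n + (M:ℤ)) =
    Complex.ofReal ((Real.sin (Real.pi * n / N)) ^ (2 * r) / Real.sqrt (U4r N r n)) := by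
  unfold betaF
  rw [U4r_shift N M r hNM hM n, arg_shift N M hNM hM n, Real.cos_add_pi_div_two,
    Even.neg_pow ⟨r, by ring⟩]

lemma omega_M (N M : ℕ) (hNM : N = 2 * M) (hM : M ≠ 0) (n : ℤ) : omegaN N ^ (n + (M:ℤ)) = -(omegaN N ^ n) := by
  rw [← omega_mul, omega_zpow N (M:ℤ)]
  have : ((M : ℤ) : ℂ) * (2 * Real.pi * Complex.I / N) = Real.pi * Complex.I := by
    have h2 : (N : ℂ) = 2 * M := by rw [hNM]; push_cast; ring
    have hM0 : (M : ℂ) ≠ 0 := Nat.cast_ne_zero.mpr hM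
    rw [h2]; push_cast; field_simp
  rw [this, Complex.exp_pi_mul_I]
  ring

lemma alpha_shift (N M r : ℕ) (hNM : N = 2 * M) (hM : M ≠ 0) (n : ℤ) : alphaF N r (n + (M:ℤ)) =
    -(omegaN N ^ n) *
      Complex.ofReal ((Real.cos (Real.pi * n / N)) ^ (2 * r) / Real.sqrt (U4r N r n)) := by
  unfold alphaF
  rw [U4r_shift N M r hNM hM n, arg_shift N M hNM hM n, Real.sin_add_pi_div_two,
    omega_M N M hNM hM n]

-- periodicity
lemma beta_per (N r : ℕ) (hN : N ≠ 0) (n : ℤ) : betaF N r (n + (N:ℤ)) = betaF N r n := by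
  unfold betaF U4r
  rw [arg_shift_N N hN n, Real.cos_add_pi, Real.sin_add_pi,
    Even.neg_pow ⟨r, by ring⟩, Even.neg_pow (n := 4*r) ⟨2*r, by ring⟩,
    Even.neg_pow (n := 4*r) ⟨2*r, by ring⟩]

lemma omega_N_per (N : ℕ) (hN : N ≠ 0) (n : ℤ) : omegaN N ^ (n + (N:ℤ)) = omegaN N ^ n := by
  rw [← omega_mul, omega_zpow N (N:ℤ)]
  have hN0 : (N : ℂ) ≠ 0 := Nat.cast_ne_zero.mpr hN
  have : ((N : ℤ) : ℂ) * (2 * Real.pi * Complex.I / N) = 2 * Real.pi * Complex.I := by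
    push_cast; field_simp
  rw [this, Complex.exp_two_pi_mul_I, mul_one]

lemma alpha_per (N r : ℕ) (hN : N ≠ 0) (n : ℤ) : alphaF N r (n + (N:ℤ)) = alphaF N r n := by
  unfold alphaF
  rw [omega_N_per N hN]
  congr 2
  unfold U4r
  rw [arg_shift_N N hN n, Real.cos_add_pi, Real.sin_add_pi,
    Even.neg_pow (n := 2*r) ⟨r, by ring⟩, Even.neg_pow (n := 4*r) ⟨2*r, by ring⟩,
    Even.neg_pow (n := 4*r) ⟨2*r, by ring⟩]


lemma conj_omega_zpow' (N : ℕ) (s : ℤ) :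
    (starRingEnd ℂ) (omegaN N ^ s) = omegaN N ^ (-s) := by
  rw [omega_zpow, omega_zpow, ← Complex.exp_conj]
  congr 1
  simp only [map_div₀, map_mul, Complex.conj_I, Complex.conj_ofNat, Complex.conj_ofReal]
  rw [show ((starRingEnd ℂ) (s : ℂ)) = (s : ℂ) by exact map_intCast _ s,
    show ((starRingEnd ℂ) (N : ℂ)) = (N : ℂ) by exact Complex.conj_natCast N]
  push_cast; ring

lemma omega_self_inv (N : ℕ) (s : ℤ) : omegaN N ^ s * omegaN N ^ (-s) = 1 := by
  rw [omega_mul]; simp [omegaN]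

section pairs
variable (N M r : ℕ)

lemma pair_diag (hN : N ≠ 0) (n : ℤ) :
    betaF N r n * (starRingEnd ℂ) (betaF N r n) +
      alphaF N r n * (starRingEnd ℂ) (alphaF N r n) = 2 := by
  unfold betaF alphaF
  rw [Complex.conj_ofReal, map_mul, Complex.conj_ofReal, conj_omega_zpow']
  rw [show omegaN N ^ n * (Complex.ofReal _) * (omegaN N ^ (-n) * (Complex.ofReal _))
      = (omegaN N ^ n * omegaN N ^ (-n)) *
        ((Complex.ofReal ((Real.sin (Real.pi * n / N)) ^ (2 * r) / Real.sqrt (U4r N r n))) *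
         (Complex.ofReal ((Real.sin (Real.pi * n / N)) ^ (2 * r) / Real.sqrt (U4r N r n)))) by ring]
  rw [omega_self_inv, one_mul, ← Complex.ofReal_mul, ← Complex.ofReal_mul, ← Complex.ofReal_add,
    real_diag N r hN n]
  norm_num

lemma pair_alpha (hNM : N = 2 * M) (hM : M ≠ 0) (n : ℤ) :
    alphaF N r n * (starRingEnd ℂ) (alphaF N r n) +
      alphaF N r (n + (M:ℤ)) * (starRingEnd ℂ) (alphaF N r (n + (M:ℤ))) = 2 := by
  have hN : N ≠ 0 := by omega
  rw [alpha_shift N M r hNM hM n]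
  unfold alphaF
  rw [map_mul, Complex.conj_ofReal, conj_omega_zpow', map_mul, Complex.conj_ofReal, map_neg,
    conj_omega_zpow']
  have h1 := omega_self_inv N n
  set w := omegaN N ^ n
  set wi := omegaN N ^ (-n)
  set cc := Complex.ofReal ((Real.cos (Real.pi * n / N)) ^ (2 * r) / Real.sqrt (U4r N r n))
  set ss := Complex.ofReal ((Real.sin (Real.pi * n / N)) ^ (2 * r) / Real.sqrt (U4r N r n))
  have : w * ss * (wi * ss) + -w * cc * (-wi * cc) = (w * wi) * (cc * cc + ss * ss) := by ring
  rw [this, h1, one_mul]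
  unfold cc ss
  rw [← Complex.ofReal_mul, ← Complex.ofReal_mul, ← Complex.ofReal_add, real_diag N r hN n]
  norm_num

lemma pair_cross (hNM : N = 2 * M) (hM : M ≠ 0) (n : ℤ) :
    alphaF N r n * (starRingEnd ℂ) (betaF N r n) +
      alphaF N r (n + (M:ℤ)) * (starRingEnd ℂ) (betaF N r (n + (M:ℤ))) = 0 := by
  rw [alpha_shift N M r hNM hM n, beta_shift N M r hNM hM n]
  unfold alphaF betaF
  rw [Complex.conj_ofReal, Complex.conj_ofReal]
  ring

lemma pair_recon_cross (hNM : N = 2 * M) (hM : M ≠ 0) (n : ℤ) :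
    (starRingEnd ℂ) (betaF N r n) * betaF N r (n + (M:ℤ)) +
      (starRingEnd ℂ) (alphaF N r n) * alphaF N r (n + (M:ℤ)) = 0 := by
  rw [alpha_shift N M r hNM hM n, beta_shift N M r hNM hM n]
  unfold alphaF betaF
  rw [Complex.conj_ofReal, map_mul, Complex.conj_ofReal, conj_omega_zpow']
  have h1 := omega_self_inv N n
  set w := omegaN N ^ n
  set wi := omegaN N ^ (-n)
  set cc := Complex.ofReal ((Real.cos (Real.pi * n / N)) ^ (2 * r) / Real.sqrt (U4r N r n))
  set ss := Complex.ofReal ((Real.sin (Real.pi * n / N)) ^ (2 * r) / Real.sqrt (U4r N r n))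
  have : cc * ss + wi * ss * (-w * cc) = (1 - w * wi) * (cc * ss) := by ring
  rw [this, h1]
  ring

end pairs

lemma omega_zpow_N (N : ℕ) (hN : N ≠ 0) (d : ℤ) : omegaN N ^ ((N : ℤ) * d) = 1 := by
  rw [omega_zpow]
  have hNC : (N : ℂ) ≠ 0 := Nat.cast_ne_zero.mpr hN
  have h : ((N : ℤ) * d : ℤ) * (2 * Real.pi * Complex.I / N) = d * (2 * Real.pi * Complex.I) := by
    push_cast; field_simp
  rw [h, Complex.exp_int_mul, Complex.exp_two_pi_mul_I, one_zpow]
lemma sum_omega (N : ℕ) (hN : N ≠ 0) (d : ℤ) :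
    ∑ n ∈ range N, omegaN N ^ (d * (n : ℤ)) = if (N : ℤ) ∣ d then (N : ℂ) else 0 := by
  have hprim : IsPrimitiveRoot (omegaN N) N := Complex.isPrimitiveRoot_exp N hN
  have h1 : ∀ n ∈ range N, omegaN N ^ (d * (n : ℤ)) = (omegaN N ^ d) ^ n := by
    intro n _; rw [zpow_mul, zpow_natCast]
  rw [Finset.sum_congr rfl h1]
  by_cases hd : (N : ℤ) ∣ d
  · have : omegaN N ^ d = 1 := (hprim.zpow_eq_one_iff_dvd d).mpr hd
    simp [this, hd]
  · have hne : omegaN N ^ d ≠ 1 := fun h => hd ((hprim.zpow_eq_one_iff_dvd d).mp h)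
    rw [geom_sum_eq hne]
    have : (omegaN N ^ d) ^ N = 1 := by
      rw [← zpow_natCast, ← zpow_mul, mul_comm, omega_zpow_N N hN]
    simp [this, hd]

lemma omega_sq (N M : ℕ) (hNM : N = 2 * M) (hM : M ≠ 0) (d : ℤ) :
    omegaN N ^ (2 * d) = omegaN M ^ d := by
  rw [omega_zpow, omega_zpow]
  congr 1
  have hM0 : (M : ℂ) ≠ 0 := Nat.cast_ne_zero.mpr hM
  have h2 : (N : ℂ) = 2 * M := by rw [hNM]; push_cast; ring
  rw [h2]; push_cast; field_simp

lemma sum_halve (M : ℕ) (f : ℕ → ℂ) :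
    ∑ n ∈ range (M + M), f n = ∑ n ∈ range M, (f n + f (n + M)) := by
  have h1 : ∑ n ∈ Ico M (M + M), f n = ∑ i ∈ range M, f (i + M) := by
    rw [Finset.sum_Ico_eq_sum_range]
    simp only [Nat.add_sub_cancel_left]
    exact Finset.sum_congr rfl fun i _ => by rw [add_comm]
  rw [Finset.sum_add_distrib, show range (M + M) = Ico 0 (M + M) by rw [Finset.range_eq_Ico],
    ← Finset.sum_Ico_consecutive _ (Nat.zero_le M) (by omega : M ≤ M + M), h1,
    ← Finset.range_eq_Ico]

lemma dvd_iff_eq (N : ℕ) (n m : ℕ) (hn : n < N) (hm : m < N) :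
    ((N : ℤ) ∣ ((n : ℤ) - m)) ↔ m = n := by
  constructor
  · intro h
    have := Int.eq_zero_of_abs_lt_dvd h (by rw [abs_sub_lt_iff]; omega)
    omega
  · rintro rfl; simp

lemma ip_psi (N : ℕ) (hN : N ≠ 0) (f g : ℤ → ℂ) (a b : ℤ) :
    ip N (fun k => (N : ℂ)⁻¹ * ∑ n ∈ range N, omegaN N ^ ((k - a) * (n : ℤ)) * f n)
         (fun k => (N : ℂ)⁻¹ * ∑ n ∈ range N, omegaN N ^ ((k - b) * (n : ℤ)) * g n)
      = (N : ℂ)⁻¹ * ∑ n ∈ range N, f n * (starRingEnd ℂ) (g n) * omegaN N ^ ((b - a) * (n : ℤ)) := by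
  have hNC : (N : ℂ) ≠ 0 := Nat.cast_ne_zero.mpr hN
  unfold ip
  have step1 : ∀ k : ℕ,
      ((N : ℂ)⁻¹ * ∑ n ∈ range N, omegaN N ^ (((k : ℤ) - a) * (n : ℤ)) * f n) *
        (starRingEnd ℂ) ((N : ℂ)⁻¹ * ∑ m ∈ range N, omegaN N ^ (((k : ℤ) - b) * (m : ℤ)) * g m)
      = (N : ℂ)⁻¹ * (N : ℂ)⁻¹ *
          ∑ n ∈ range N, ∑ m ∈ range N,
            (f n * (starRingEnd ℂ) (g m) * omegaN N ^ (b * (m : ℤ) - a * (n : ℤ))) *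
              omegaN N ^ (((n : ℤ) - (m : ℤ)) * (k : ℤ)) := by
    intro k
    rw [map_mul, map_sum, map_inv₀, Complex.conj_natCast, mul_mul_mul_comm, Finset.sum_mul_sum]
    congr 1
    refine Finset.sum_congr rfl fun n _ => Finset.sum_congr rfl fun m _ => ?_
    rw [map_mul, conj_omega_zpow']
    rw [show omegaN N ^ (((k : ℤ) - a) * (n : ℤ)) * f n *
          (omegaN N ^ (-(((k : ℤ) - b) * (m : ℤ))) * (starRingEnd ℂ) (g m))
        = (omegaN N ^ (((k : ℤ) - a) * (n : ℤ)) * omegaN N ^ (-(((k : ℤ) - b) * (m : ℤ)))) *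
          (f n * (starRingEnd ℂ) (g m)) by ring]
    rw [omega_mul,
      show ((k : ℤ) - a) * (n : ℤ) + -(((k : ℤ) - b) * (m : ℤ))
        = (b * (m : ℤ) - a * (n : ℤ)) + ((n : ℤ) - (m : ℤ)) * (k : ℤ) by ring,
      ← omega_mul]
    ring
  rw [Finset.sum_congr rfl fun k _ => step1 k, ← Finset.mul_sum, Finset.sum_comm]
  have step2 : ∀ n ∈ range N,
      (∑ k ∈ range N, ∑ m ∈ range N,
        (f n * (starRingEnd ℂ) (g m) * omegaN N ^ (b * (m : ℤ) - a * (n : ℤ))) *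
          omegaN N ^ (((n : ℤ) - (m : ℤ)) * (k : ℤ)))
      = f n * (starRingEnd ℂ) (g n) * omegaN N ^ ((b - a) * (n : ℤ)) * N := by
    intro n hn
    rw [Finset.sum_comm]
    have collapse : ∀ m ∈ range N,
        (∑ k ∈ range N,
          (f n * (starRingEnd ℂ) (g m) * omegaN N ^ (b * (m : ℤ) - a * (n : ℤ))) *
            omegaN N ^ (((n : ℤ) - (m : ℤ)) * (k : ℤ)))
        = if m = n then f n * (starRingEnd ℂ) (g m) * omegaN N ^ (b * (m : ℤ) - a * (n : ℤ)) * N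
          else 0 := by
      intro m hm
      rw [← Finset.mul_sum, sum_omega N hN]
      simp only [dvd_iff_eq N n m (mem_range.mp hn) (mem_range.mp hm)]
      by_cases h : m = n <;> simp [h]
    rw [Finset.sum_congr rfl collapse, Finset.sum_ite_eq' (range N) n, if_pos hn]
    congr 2
    rw [show (b - a) * (n : ℤ) = b * (n : ℤ) - a * (n : ℤ) by ring]
  rw [Finset.sum_congr rfl step2, ← Finset.sum_mul]
  field_simp

noncomputable def xhat (N : ℕ) (x : ℤ → ℂ) (n : ℕ) : ℂ :=
  ∑ t ∈ range N, x t * omegaN N ^ (-((t : ℤ) * (n : ℤ)))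

lemma ip_x (N : ℕ) (hN : N ≠ 0) (x : ℤ → ℂ) (g : ℤ → ℂ) (a : ℤ) :
    ip N x (fun t => (N : ℂ)⁻¹ * ∑ n ∈ range N, omegaN N ^ ((t - a) * (n : ℤ)) * g n)
      = (N : ℂ)⁻¹ * ∑ n ∈ range N, xhat N x n * (starRingEnd ℂ) (g n) * omegaN N ^ (a * (n : ℤ)) := by
  unfold ip
  have step1 : ∀ t : ℕ,
      x t * (starRingEnd ℂ) ((N : ℂ)⁻¹ * ∑ n ∈ range N, omegaN N ^ (((t : ℤ) - a) * (n : ℤ)) * g n)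
      = (N : ℂ)⁻¹ * ∑ n ∈ range N,
          (x t * omegaN N ^ (-((t : ℤ) * (n : ℤ)))) *
            ((starRingEnd ℂ) (g n) * omegaN N ^ (a * (n : ℤ))) := by
    intro t
    rw [map_mul, map_sum, map_inv₀, Complex.conj_natCast, mul_left_comm, Finset.mul_sum]
    congr 1
    refine Finset.sum_congr rfl fun n _ => ?_
    rw [map_mul, conj_omega_zpow']
    rw [show x t * (omegaN N ^ (-(((t : ℤ) - a) * (n : ℤ))) * (starRingEnd ℂ) (g n))
        = (omegaN N ^ (-(((t : ℤ) - a) * (n : ℤ)))) * (x t * (starRingEnd ℂ) (g n)) by ring,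
      show -(((t : ℤ) - a) * (n : ℤ)) = -((t : ℤ) * (n : ℤ)) + a * (n : ℤ) by ring,
      ← omega_mul]
    ring
  rw [Finset.sum_congr rfl fun t _ => step1 t, ← Finset.mul_sum, Finset.sum_comm]
  congr 1
  refine Finset.sum_congr rfl fun n _ => ?_
  rw [← Finset.sum_mul]
  unfold xhat
  ring

lemma periodic_shift (N : ℕ) (x : ℤ → ℂ) (hper : ∀ k : ℤ, x (k + N) = x k) :
    ∀ c : ℤ, ∀ s : ℤ, x (s + N * c) = x s := by
  intro c
  induction c using Int.induction_on with
  | zero => simp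
  | succ i ih =>
    intro s
    rw [show s + (N : ℤ) * ((i : ℤ) + 1) = (s + N * i) + N by ring, hper, ih]
  | pred i ih =>
    intro s
    rw [show s + (N : ℤ) * (-(i : ℤ) - 1) = (s + N * (-(i:ℤ))) - N by ring]
    have h2 := hper ((s + N * (-(i:ℤ))) - N)
    rw [show (s + (N:ℤ) * (-(i:ℤ))) - N + N = s + N * (-(i:ℤ)) by ring] at h2
    rw [← h2]
    exact ih s

lemma invDFT (N : ℕ) (hN : N ≠ 0) (x : ℤ → ℂ) (hper : ∀ k : ℤ, x (k + N) = x k) (k : ℤ) :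
    (N : ℂ)⁻¹ * ∑ n ∈ range N, xhat N x n * omegaN N ^ (k * (n : ℤ)) = x k := by
  have hNC : (N : ℂ) ≠ 0 := Nat.cast_ne_zero.mpr hN
  have hNZ : 0 < (N : ℤ) := by positivity
  have step1 : ∀ n ∈ range N, xhat N x n * omegaN N ^ (k * (n : ℤ))
      = ∑ t ∈ range N, x t * omegaN N ^ ((k - t) * (n : ℤ)) := by
    intro n _
    unfold xhat
    rw [Finset.sum_mul]
    refine Finset.sum_congr rfl fun t _ => ?_
    rw [mul_assoc, omega_mul]
    congr 2
    ring
  rw [Finset.sum_congr rfl step1, Finset.sum_comm]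
  have step2 : ∀ t ∈ range N, (∑ n ∈ range N, x t * omegaN N ^ ((k - (t:ℤ)) * (n : ℤ)))
      = x t * (if (N : ℤ) ∣ (k - t) then (N : ℂ) else 0) := by
    intro t _
    rw [← Finset.mul_sum, sum_omega N hN]
  rw [Finset.sum_congr rfl step2]
  set t0 : ℕ := (k % N).toNat with ht0def
  have ht0 : (t0 : ℤ) = k % N := Int.toNat_of_nonneg (Int.emod_nonneg k (by omega))
  have ht0N : t0 < N := by
    have := Int.emod_lt_of_pos k hNZ
    omega
  have hdvd : (N : ℤ) ∣ (k - t0) := ⟨k / N, by have := Int.mul_ediv_add_emod k N; omega⟩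
  have step3 : ∀ t ∈ range N,
      x t * (if (N : ℤ) ∣ (k - t) then (N : ℂ) else 0)
      = if t = t0 then x t * N else 0 := by
    intro t ht
    have hiff : ((N : ℤ) ∣ (k - t)) ↔ t = t0 := by
      constructor
      · intro h
        have hd2 : (N : ℤ) ∣ ((t0 : ℤ) - t) := by
          have := Int.dvd_sub hdvd h
          rwa [show k - t0 - (k - t) = -((t0:ℤ) - t) by ring, Int.dvd_neg] at this
        have := Int.eq_zero_of_abs_lt_dvd hd2
          (by rw [abs_sub_lt_iff]; constructor <;> [omega; (have := mem_range.mp ht; omega)])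
        omega
      · rintro rfl; exact hdvd
    simp only [hiff]
    by_cases h : t = t0 <;> simp [h]
  rw [Finset.sum_congr rfl step3, Finset.sum_ite_eq' (range N) t0, if_pos (mem_range.mpr ht0N)]
  have hxt0 : x t0 = x k := by
    have := periodic_shift N x hper (k / N) t0
    rw [show (t0 : ℤ) + N * (k / N) = k by have := Int.mul_ediv_add_emod k N; omega] at this
    exact this.symm
  rw [hxt0]
  field_simp

lemma sum_two (N : ℕ) (H : ℕ → ℂ) (n q : ℕ) (hn : n ∈ range N) (hq : q ∈ range N) (hne : n ≠ q) :
    ∑ m ∈ range N, (if m = n ∨ m = q then H m else 0) = H n + H q := by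
  have key : ∀ m : ℕ, (if m = n ∨ m = q then H m else 0)
      = (if m = n then H m else 0) + (if m = q then H m else 0) := by
    intro m
    by_cases h1 : m = n <;> by_cases h2 : m = q
    · exact absurd (h1 ▸ h2) hne
    · subst h1
      rw [if_pos (Or.inl rfl), if_pos rfl, if_neg h2, add_zero]
    · subst h2
      rw [if_pos (Or.inr rfl), if_pos rfl, if_neg h1, zero_add]
    · rw [if_neg (by tauto), if_neg h1, if_neg h2, add_zero]
  rw [Finset.sum_congr rfl fun m _ => key m, Finset.sum_add_distrib,
    Finset.sum_ite_eq' (range N) n, Finset.sum_ite_eq' (range N) q, if_pos hn, if_pos hq]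

def partner (M n : ℕ) : ℕ := if n < M then n + M else n - M

lemma dvd_iff_pair (N M : ℕ) (hNM : N = 2 * M) (hM : M ≠ 0) (n m : ℕ)
    (hn : n < N) (hm : m < N) :
    ((M : ℤ) ∣ ((n : ℤ) - m)) ↔ (m = n ∨ m = partner M n) := by
  unfold partner
  constructor
  · rintro ⟨c, hc⟩
    have hMZ : 0 < (M : ℤ) := by omega
    have h1 : c ≤ 1 := by nlinarith
    have h2 : -1 ≤ c := by nlinarith
    interval_cases c <;> [skip; skip; skip] <;> simp at hc <;> split_ifs <;> omega
  · intro h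
    rcases h with rfl | rfl
    · simp
    · split_ifs with h
      · exact ⟨-1, by push_cast; omega⟩
      · refine ⟨1, ?_⟩
        have : M ≤ n := by omega
        push_cast [this]
        omega

lemma partner_lt (N M : ℕ) (hNM : N = 2 * M) (hM : M ≠ 0) (n : ℕ) (hn : n < N) :
    partner M n < N := by unfold partner; split_ifs <;> omega

lemma partner_ne (N M : ℕ) (hNM : N = 2 * M) (hM : M ≠ 0) (n : ℕ) (hn : n < N) :
    n ≠ partner M n := by unfold partner; split_ifs <;> omega

lemma part1 (N M r : ℕ) (hNM : N = 2 * M) (hM : M ≠ 0) (l p : ℕ) (hl : l < M) (hp : p < M) :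
    ip N (fun k => psi1 N r (k - 2 * (l : ℤ))) (fun k => psi1 N r (k - 2 * (p : ℤ))) =
      if l = p then 1 else 0 := by
  have hN : N ≠ 0 := by omega
  have hNMZ : (N : ℤ) = 2 * (M : ℤ) := by exact_mod_cast hNM
  simp only [psi1]
  rw [ip_psi N hN (alphaF N r) (alphaF N r) (2 * (l : ℤ)) (2 * (p : ℤ))]
  rw [show range N = range (M + M) by congr 1; omega]
  rw [sum_halve M (fun n => alphaF N r n * (starRingEnd ℂ) (alphaF N r n) *
    omegaN N ^ ((2 * (p:ℤ) - 2 * (l:ℤ)) * (n : ℤ)))]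
  have step : ∀ n ∈ range M,
      (alphaF N r n * (starRingEnd ℂ) (alphaF N r n) *
          omegaN N ^ ((2 * (p:ℤ) - 2 * (l:ℤ)) * (n : ℤ)) +
        alphaF N r ((n + M : ℕ) : ℤ) * (starRingEnd ℂ) (alphaF N r ((n + M : ℕ) : ℤ)) *
          omegaN N ^ ((2 * (p:ℤ) - 2 * (l:ℤ)) * ((n + M : ℕ) : ℤ)))
      = 2 * omegaN M ^ (((p:ℤ) - (l:ℤ)) * (n : ℤ)) := by
    intro n _
    have hcast : ((n + M : ℕ) : ℤ) = (n : ℤ) + (M : ℤ) := by push_cast; ring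
    rw [hcast,
      show (2 * (p:ℤ) - 2 * (l:ℤ)) * ((n : ℤ) + (M:ℤ))
          = (N : ℤ) * ((p:ℤ) - (l:ℤ)) + (2 * (p:ℤ) - 2 * (l:ℤ)) * (n : ℤ) by
        rw [hNMZ]; ring,
      ← omega_mul, omega_zpow_N N hN, one_mul, ← add_mul,
      pair_alpha N M r hNM hM (n : ℤ),
      show (2 * (p:ℤ) - 2 * (l:ℤ)) * (n : ℤ) = 2 * (((p:ℤ) - (l:ℤ)) * (n : ℤ)) by ring,
      omega_sq N M hNM hM]
  rw [Finset.sum_congr rfl step, ← Finset.mul_sum, sum_omega M hM ((p:ℤ) - (l:ℤ))]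
  simp only [dvd_iff_eq M p l hp hl]
  by_cases h : l = p
  · have hMC : (M : ℂ) ≠ 0 := Nat.cast_ne_zero.mpr hM
    have hNC : (N : ℂ) = 2 * M := by rw [hNM]; push_cast; ring
    rw [if_pos h, if_pos h, hNC]
    field_simp
  · rw [if_neg h, if_neg h]
    simp

lemma part2 (N M r : ℕ) (hNM : N = 2 * M) (hM : M ≠ 0) (l p : ℕ) (hl : l < M) (hp : p < M) :
    ip N (fun k => psi1 N r (k - 2 * (l : ℤ))) (fun k => psi0 N r (k - 2 * (p : ℤ))) = 0 := by
  have hN : N ≠ 0 := by omega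
  have hNMZ : (N : ℤ) = 2 * (M : ℤ) := by exact_mod_cast hNM
  simp only [psi0, psi1]
  rw [ip_psi N hN (alphaF N r) (betaF N r) (2 * (l : ℤ)) (2 * (p : ℤ))]
  rw [show range N = range (M + M) by congr 1; omega]
  rw [sum_halve M (fun n => alphaF N r n * (starRingEnd ℂ) (betaF N r n) *
    omegaN N ^ ((2 * (p:ℤ) - 2 * (l:ℤ)) * (n : ℤ)))]
  have step : ∀ n ∈ range M,
      (alphaF N r n * (starRingEnd ℂ) (betaF N r n) *
          omegaN N ^ ((2 * (p:ℤ) - 2 * (l:ℤ)) * (n : ℤ)) +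
        alphaF N r ((n + M : ℕ) : ℤ) * (starRingEnd ℂ) (betaF N r ((n + M : ℕ) : ℤ)) *
          omegaN N ^ ((2 * (p:ℤ) - 2 * (l:ℤ)) * ((n + M : ℕ) : ℤ)))
      = 0 := by
    intro n _
    have hcast : ((n + M : ℕ) : ℤ) = (n : ℤ) + (M : ℤ) := by push_cast; ring
    rw [hcast,
      show (2 * (p:ℤ) - 2 * (l:ℤ)) * ((n : ℤ) + (M:ℤ))
          = (N : ℤ) * ((p:ℤ) - (l:ℤ)) + (2 * (p:ℤ) - 2 * (l:ℤ)) * (n : ℤ) by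
        rw [hNMZ]; ring,
      ← omega_mul, omega_zpow_N N hN, one_mul, ← add_mul,
      pair_cross N M r hNM hM (n : ℤ), zero_mul]
  rw [Finset.sum_congr rfl step]
  simp

lemma pair_diag' (N r : ℕ) (hN : N ≠ 0) (n : ℤ) :
    (starRingEnd ℂ) (betaF N r n) * betaF N r n +
      (starRingEnd ℂ) (alphaF N r n) * alphaF N r n = 2 := by
  rw [mul_comm, mul_comm ((starRingEnd ℂ) (alphaF N r n))]
  exact pair_diag N r hN n

lemma pair_partner (N M r : ℕ) (hNM : N = 2 * M) (hM : M ≠ 0) (n : ℕ) (hn : n < N) :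
    (starRingEnd ℂ) (betaF N r n) * betaF N r ((partner M n : ℕ) : ℤ) +
      (starRingEnd ℂ) (alphaF N r n) * alphaF N r ((partner M n : ℕ) : ℤ) = 0 := by
  have hN : N ≠ 0 := by omega
  have hNMZ : (N : ℤ) = 2 * M := by exact_mod_cast hNM
  unfold partner
  split_ifs with h
  · rw [show ((n + M : ℕ) : ℤ) = (n:ℤ) + (M:ℤ) by push_cast; ring]
    exact pair_recon_cross N M r hNM hM n
  · have hMn : M ≤ n := by omega
    rw [show ((n - M : ℕ) : ℤ) = (n:ℤ) - (M:ℤ) by push_cast [hMn]; ring]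
    have hb : betaF N r ((n:ℤ) - M) = betaF N r ((n:ℤ) + M) := by
      rw [← beta_per N r hN ((n:ℤ) - M)]
      congr 1
      omega
    have ha : alphaF N r ((n:ℤ) - M) = alphaF N r ((n:ℤ) + M) := by
      rw [← alpha_per N r hN ((n:ℤ) - M)]
      congr 1
      omega
    rw [hb, ha]
    exact pair_recon_cross N M r hNM hM n

lemma part3 (N M r : ℕ) (hNM : N = 2 * M) (hM : M ≠ 0) (x : ℤ → ℂ)
    (hper : ∀ k : ℤ, x (k + N) = x k) (k : ℤ) :
    x k = ∑ l ∈ range M,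
      (ip N x (fun t => psi0 N r (t - 2 * (l : ℤ))) * psi0 N r (k - 2 * (l : ℤ)) +
       ip N x (fun t => psi1 N r (t - 2 * (l : ℤ))) * psi1 N r (k - 2 * (l : ℤ))) := by
  have hN : N ≠ 0 := by omega
  have hNC : (N : ℂ) ≠ 0 := Nat.cast_ne_zero.mpr hN
  have hNMZ : (N : ℤ) = 2 * (M : ℤ) := by exact_mod_cast hNM
  symm
  have step1 : ∀ l ∈ range M,
      (ip N x (fun t => psi0 N r (t - 2 * (l : ℤ))) * psi0 N r (k - 2 * (l : ℤ)) +
       ip N x (fun t => psi1 N r (t - 2 * (l : ℤ))) * psi1 N r (k - 2 * (l : ℤ)))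
      = (N : ℂ)⁻¹ * (N : ℂ)⁻¹ *
          ∑ n ∈ range N, ∑ m ∈ range N,
            (xhat N x n *
              ((starRingEnd ℂ) (betaF N r n) * betaF N r m +
               (starRingEnd ℂ) (alphaF N r n) * alphaF N r m) * omegaN N ^ (k * (m : ℤ))) *
              omegaN M ^ (((n : ℤ) - (m : ℤ)) * (l : ℤ)) := by
    intro l _
    simp only [psi0, psi1]
    rw [ip_x N hN x (betaF N r) (2 * (l : ℤ)), ip_x N hN x (alphaF N r) (2 * (l : ℤ))]
    rw [show ∀ (S1 S2 S3 S4 : ℂ), ((N:ℂ)⁻¹*S1)*((N:ℂ)⁻¹*S2) + ((N:ℂ)⁻¹*S3)*((N:ℂ)⁻¹*S4)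
        = (N:ℂ)⁻¹*(N:ℂ)⁻¹*(S1*S2 + S3*S4) from fun _ _ _ _ => by ring]
    rw [Finset.sum_mul_sum, Finset.sum_mul_sum, ← Finset.sum_add_distrib]
    congr 1
    refine Finset.sum_congr rfl fun n _ => ?_
    rw [← Finset.sum_add_distrib]
    refine Finset.sum_congr rfl fun m _ => ?_
    have hw : omegaN N ^ ((2 * (l:ℤ)) * (n : ℤ)) * omegaN N ^ ((k - 2 * (l:ℤ)) * (m : ℤ))
        = omegaN N ^ (k * (m : ℤ)) * omegaN M ^ (((n : ℤ) - (m : ℤ)) * (l : ℤ)) := by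
      rw [omega_mul,
        show (2 * (l:ℤ)) * (n : ℤ) + (k - 2 * (l:ℤ)) * (m : ℤ)
            = k * (m : ℤ) + 2 * ((((n : ℤ)) - (m : ℤ)) * (l : ℤ)) by ring,
        ← omega_mul, omega_sq N M hNM hM]
    calc xhat N x n * (starRingEnd ℂ) (betaF N r n) * omegaN N ^ ((2 * (l:ℤ)) * (n : ℤ)) *
            (omegaN N ^ ((k - 2 * (l:ℤ)) * (m : ℤ)) * betaF N r m) +
          xhat N x n * (starRingEnd ℂ) (alphaF N r n) * omegaN N ^ ((2 * (l:ℤ)) * (n : ℤ)) *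
            (omegaN N ^ ((k - 2 * (l:ℤ)) * (m : ℤ)) * alphaF N r m)
        = (xhat N x n *
            ((starRingEnd ℂ) (betaF N r n) * betaF N r m +
             (starRingEnd ℂ) (alphaF N r n) * alphaF N r m)) *
            (omegaN N ^ ((2 * (l:ℤ)) * (n : ℤ)) * omegaN N ^ ((k - 2 * (l:ℤ)) * (m : ℤ))) := by
          ring
      _ = _ := by rw [hw]; ring
  rw [Finset.sum_congr rfl step1, ← Finset.mul_sum, Finset.sum_comm]
  have step2 : ∀ n ∈ range N,
      (∑ l ∈ range M, ∑ m ∈ range N,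
        (xhat N x n *
          ((starRingEnd ℂ) (betaF N r n) * betaF N r m +
           (starRingEnd ℂ) (alphaF N r n) * alphaF N r m) * omegaN N ^ (k * (m : ℤ))) *
          omegaN M ^ (((n : ℤ) - (m : ℤ)) * (l : ℤ)))
      = 2 * (M : ℂ) * (xhat N x n * omegaN N ^ (k * (n : ℤ))) := by
    intro n hn
    rw [Finset.sum_comm]
    have inner : ∀ m ∈ range N,
        (∑ l ∈ range M,
          (xhat N x n *
            ((starRingEnd ℂ) (betaF N r n) * betaF N r m +
             (starRingEnd ℂ) (alphaF N r n) * alphaF N r m) * omegaN N ^ (k * (m : ℤ))) *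
            omegaN M ^ (((n : ℤ) - (m : ℤ)) * (l : ℤ)))
        = if m = n ∨ m = partner M n then
            (xhat N x n *
              ((starRingEnd ℂ) (betaF N r n) * betaF N r m +
               (starRingEnd ℂ) (alphaF N r n) * alphaF N r m) * omegaN N ^ (k * (m : ℤ))) * M
          else 0 := by
      intro m hm
      rw [← Finset.mul_sum, sum_omega M hM (((n : ℤ) - (m : ℤ)))]
      simp only [dvd_iff_pair N M hNM hM n m (mem_range.mp hn) (mem_range.mp hm)]
      by_cases h : (m = n ∨ m = partner M n) <;> simp [h]
    rw [Finset.sum_congr rfl inner,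
      sum_two N _ n (partner M n) hn
        (mem_range.mpr (partner_lt N M hNM hM n (mem_range.mp hn)))
        (partner_ne N M hNM hM n (mem_range.mp hn)),
      pair_diag' N r hN (n : ℤ), pair_partner N M r hNM hM n (mem_range.mp hn)]
    ring
  rw [Finset.sum_congr rfl step2, ← Finset.mul_sum,
    show (2 : ℂ) * (M : ℂ) = (N : ℂ) by rw [hNM]; push_cast; ring,
    show (N : ℂ)⁻¹ * (N : ℂ)⁻¹ * ((N : ℂ) * ∑ n ∈ range N, xhat N x n * omegaN N ^ (k * (n : ℤ)))
      = (N : ℂ)⁻¹ * ∑ n ∈ range N, xhat N x n * omegaN N ^ (k * (n : ℤ)) by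
        field_simp]
  exact invDFT N hN x hper k

/-- The two-sample shifts of ψ₁ form an orthonormal system, each shift of ψ₁
is orthogonal to each shift of ψ₀, and the combined family is an orthonormal basis of Π[N]
(expressed via the reconstruction formula for every N-periodic signal). -/
theorem stmt_1 (j r : ℕ) (hj : 3 ≤ j) (hr : 1 ≤ r) (N : ℕ) (hN : N = 2 ^ j) :
    (∀ l p : ℕ, l < N / 2 → p < N / 2 →
      ip N (fun k => psi1 N r (k - 2 * (l : ℤ))) (fun k => psi1 N r (k - 2 * (p : ℤ))) =
        if l = p then 1 else 0) ∧
    (∀ l p : ℕ, l < N / 2 → p < N / 2 →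
      ip N (fun k => psi1 N r (k - 2 * (l : ℤ))) (fun k => psi0 N r (k - 2 * (p : ℤ))) = 0) ∧
    (∀ x : ℤ → ℂ, (∀ k : ℤ, x (k + N) = x k) → ∀ k : ℤ,
      x k = ∑ l ∈ Finset.range (N / 2),
        (ip N x (fun t => psi0 N r (t - 2 * (l : ℤ))) * psi0 N r (k - 2 * (l : ℤ)) +
         ip N x (fun t => psi1 N r (t - 2 * (l : ℤ))) * psi1 N r (k - 2 * (l : ℤ)))) := by
  have hM2 : N = 2 * 2 ^ (j - 1) := by
    subst hN; rw [← pow_succ']; congr 1; omega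
  have hMpos : 0 < 2 ^ (j - 1) := by positivity
  have hNM : N = 2 * (N / 2) := by omega
  have hM : N / 2 ≠ 0 := by omega
  refine ⟨fun l p hl hp => ?_, fun l p hl hp => ?_, fun x hper k => ?_⟩
  · exact part1 N (N / 2) r hNM hM l p hl hp
  · exact part2 N (N / 2) r hNM hM l p hl hp
  · exact part3 N (N / 2) r hNM hM x hper k
end

section
/- Let m ≥ 1 with 2^m dividing N, and let ψ ∈ Π[N] be a real-valued signal such that ψ̂[0] = 0, ψ̂[N/2] = 0, and the 2^m-sample shifts {ψ[·−2^m l] : l = 0,…,N/2^m−1} are orthonormal. Then the 2^m-sample shifts of the Hilbert-transform waveform θ = H(ψ) are also orthonormal: ⟨θ[·−2^m l], θ[·−2^m p]⟩ = δ[l−p] for all l, p ∈ {0,…,N/2^m−1}. -/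
open Finset
open Complex

/-- Discrete Fourier transform of an N-periodic signal: x̂[n] = Σ_{k=0}^{N−1} x[k] ω^{−kn}. -/
noncomputable def dft (N : ℕ) (x : ℤ → ℂ) (n : ℤ) : ℂ :=
  ∑ k ∈ Finset.range N, x k * omegaN N ^ (-((k : ℤ) * n))

/-- Discrete periodic Hilbert transform: the signal whose DFT is −i·x̂[n] for 0 < n < N/2,
+i·x̂[n] for N/2 < n < N, and 0 for n = 0 and n = N/2. -/
noncomputable def HT (N : ℕ) (x : ℤ → ℂ) (k : ℤ) : ℂ :=
  (N : ℂ)⁻¹ * ∑ n ∈ Finset.range N,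
    (if n = 0 ∨ 2 * n = N then 0 else if 2 * n < N then -Complex.I else Complex.I) *
      dft N x n * omegaN N ^ (k * (n : ℤ))

lemma omega_ne_zero (N : ℕ) : omegaN N ≠ 0 := Complex.exp_ne_zero _

lemma omega_prim (N : ℕ) (hN : N ≠ 0) : IsPrimitiveRoot (omegaN N) N :=
  Complex.isPrimitiveRoot_exp N hN

lemma omega_zpow_eq_one (N : ℕ) (hN : N ≠ 0) (t : ℤ) :
    omegaN N ^ t = 1 ↔ (N : ℤ) ∣ t :=
  (omega_prim N hN).zpow_eq_one_iff_dvd t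

lemma omega_geom (N : ℕ) (hN : N ≠ 0) (t : ℤ) :
    ∑ k ∈ Finset.range N, omegaN N ^ ((k : ℤ) * t) = if (N : ℤ) ∣ t then (N : ℂ) else 0 := by
  have hrw : ∀ k : ℕ, omegaN N ^ ((k : ℤ) * t) = (omegaN N ^ t) ^ k := by
    intro k
    rw [mul_comm, zpow_mul, zpow_natCast]
  simp only [hrw]
  by_cases h : (N : ℤ) ∣ t
  · have h1 : omegaN N ^ t = 1 := (omega_zpow_eq_one N hN t).2 h
    simp [h1, h]
  · have h1 : omegaN N ^ t ≠ 1 := fun hc => h ((omega_zpow_eq_one N hN t).1 hc)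
    rw [geom_sum_eq h1]
    have h2 : (omegaN N ^ t) ^ N = 1 := by
      rw [← zpow_natCast, ← zpow_mul, mul_comm, zpow_mul, zpow_natCast,
        (omega_prim N hN).pow_eq_one, one_zpow]
    simp [h, h2]

lemma omega_conj (N : ℕ) (t : ℤ) :
    (starRingEnd ℂ) (omegaN N ^ t) = omegaN N ^ (-t) := by
  have h1 : ‖omegaN N‖ = 1 := by
    have he : (2 * (Real.pi : ℂ) * Complex.I / N) = ((2 * Real.pi / N : ℝ) : ℂ) * Complex.I := by
      push_cast; ring
    rw [omegaN, he, Complex.norm_exp_ofReal_mul_I]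
  have h2 : (starRingEnd ℂ) (omegaN N) = (omegaN N)⁻¹ := by
    rw [← Complex.inv_eq_conj h1]
  rw [map_zpow₀, h2, ← zpow_neg_one, ← zpow_mul]
  ring_nf


/-- Shifting the index of a sum over one period of an N-periodic function by one. -/
lemma sum_shift_one (N : ℕ) (hN : N ≠ 0) (g : ℤ → ℂ) (hg : ∀ k : ℤ, g (k + N) = g k) :
    ∑ k ∈ Finset.range N, g ((k : ℤ) + 1) = ∑ k ∈ Finset.range N, g k := by
  obtain ⟨M, rfl⟩ := Nat.exists_eq_succ_of_ne_zero hN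
  rw [Finset.sum_range_succ, Finset.sum_range_succ']
  have h1 : g ((M : ℤ) + 1) = g 0 := by
    have := hg 0
    rw [zero_add] at this
    rw [← this]
    norm_num
  rw [h1]
  have h2 : ∀ i ∈ Finset.range M, g ((i : ℤ) + 1) = g ((i + 1 : ℕ) : ℤ) := by
    intro i _; push_cast; ring_nf
  rw [Finset.sum_congr rfl h2]
  ring

lemma sum_shift (N : ℕ) (hN : N ≠ 0) (g : ℤ → ℂ) (hg : ∀ k : ℤ, g (k + N) = g k) (a : ℤ) :
    ∑ k ∈ Finset.range N, g ((k : ℤ) + a) = ∑ k ∈ Finset.range N, g k := by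
  induction a using Int.induction_on with
  | zero => simp
  | succ n ih =>
      have h := sum_shift_one N hN (fun k => g (k + n)) (fun k => by
        have := hg (k + n); rw [show k + (n : ℤ) + N = k + N + n by ring] at this
        simpa using this)
      calc ∑ k ∈ Finset.range N, g ((k : ℤ) + (n + 1))
          = ∑ k ∈ Finset.range N, g (((k : ℤ) + 1) + n) := by
            apply Finset.sum_congr rfl; intro i _; ring_nf
        _ = ∑ k ∈ Finset.range N, g ((k : ℤ) + n) := h
        _ = _ := ih
  | pred n ih =>
      have h := sum_shift_one N hN (fun k => g (k + (-(n : ℤ) - 1))) (fun k => by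
        have := hg (k + (-(n : ℤ) - 1))
        rw [show k + (-(n : ℤ) - 1) + N = k + N + (-(n : ℤ) - 1) by ring] at this
        simpa using this)
      calc ∑ k ∈ Finset.range N, g ((k : ℤ) + (-(n : ℤ) - 1))
          = ∑ k ∈ Finset.range N, g (((k : ℤ) + 1) + (-(n : ℤ) - 1)) := h.symm
        _ = ∑ k ∈ Finset.range N, g ((k : ℤ) + (-(n : ℤ))) := by
            apply Finset.sum_congr rfl; intro i _; ring_nf
        _ = _ := ih

lemma omega_zpow_add (N : ℕ) (s t : ℤ) :
    omegaN N ^ (s + t) = omegaN N ^ s * omegaN N ^ t :=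
  zpow_add₀ (omega_ne_zero N) s t

lemma omega_zpow_N_mul (N : ℕ) (hN : N ≠ 0) (t : ℤ) : omegaN N ^ ((N : ℤ) * t) = 1 :=
  (omega_zpow_eq_one N hN _).2 ⟨t, rfl⟩

lemma omega_zpow_addN (N : ℕ) (hN : N ≠ 0) (s t : ℤ) :
    omegaN N ^ (s + (N : ℤ) * t) = omegaN N ^ s := by
  rw [omega_zpow_add, omega_zpow_N_mul N hN, mul_one]

/-- DFT of a shifted signal. -/
lemma dft_shift (N : ℕ) (hN : N ≠ 0) (x : ℤ → ℂ) (hx : ∀ k : ℤ, x (k + N) = x k)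
    (a n : ℤ) :
    dft N (fun k => x (k - a)) n = omegaN N ^ (-(a * n)) * dft N x n := by
  unfold dft
  set g : ℤ → ℂ := fun k => x (k - a) * omegaN N ^ (-((k - a) * n)) with hg
  have hper : ∀ k : ℤ, g (k + N) = g k := by
    intro k
    have e1 : x (k + N - a) = x (k - a) := by
      rw [show k + (N : ℤ) - a = (k - a) + N by ring, hx]
    have e2 : omegaN N ^ (-((k + N - a) * n)) = omegaN N ^ (-((k - a) * n)) := by
      rw [show -((k + (N : ℤ) - a) * n) = -((k - a) * n) + (N : ℤ) * (-n) by ring,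
        omega_zpow_addN N hN]
    simp only [hg, e1, e2]
  have hs := sum_shift N hN g hper a
  have e3 : ∑ k ∈ Finset.range N, g ((k : ℤ) + a)
      = ∑ k ∈ Finset.range N, x k * omegaN N ^ (-((k : ℤ) * n)) := by
    apply Finset.sum_congr rfl; intro i _
    simp only [hg]
    rw [show (i : ℤ) + a - a = (i : ℤ) by ring]
  have e4 : ∑ k ∈ Finset.range N, g (k : ℤ)
      = ∑ k ∈ Finset.range N, x ((k : ℤ) - a) * omegaN N ^ (-(((k : ℤ) - a) * n)) := rfl
  have key : ∑ k ∈ Finset.range N, x ((k : ℤ) - a) * omegaN N ^ (-(((k : ℤ) - a) * n))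
      = ∑ k ∈ Finset.range N, x k * omegaN N ^ (-((k : ℤ) * n)) := by
    rw [← e4, ← hs, e3]
  calc ∑ k ∈ Finset.range N, x ((k : ℤ) - a) * omegaN N ^ (-((k : ℤ) * n))
      = ∑ k ∈ Finset.range N, omegaN N ^ (-(a * n)) *
          (x ((k : ℤ) - a) * omegaN N ^ (-(((k : ℤ) - a) * n))) := by
        apply Finset.sum_congr rfl; intro i _
        rw [show -((i : ℤ) * n) = -(a * n) + -(((i : ℤ) - a) * n) by ring, omega_zpow_add]
        ring
    _ = omegaN N ^ (-(a * n)) * ∑ k ∈ Finset.range N, x k * omegaN N ^ (-((k : ℤ) * n)) := by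
        rw [← Finset.mul_sum, key]

lemma parseval (N : ℕ) (hN : N ≠ 0) (x y : ℤ → ℂ) :
    ip N x y = (N : ℂ)⁻¹ * ∑ n ∈ Finset.range N, dft N x n * (starRingEnd ℂ) (dft N y n) := by
  have expand : ∀ n : ℕ, dft N x n * (starRingEnd ℂ) (dft N y n)
      = ∑ k ∈ Finset.range N, ∑ k' ∈ Finset.range N,
          x k * (starRingEnd ℂ) (y k') * omegaN N ^ ((n : ℤ) * ((k' : ℤ) - (k : ℤ))) := by
    intro n
    unfold dft
    rw [map_sum, Finset.sum_mul_sum]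
    apply Finset.sum_congr rfl; intro k _
    apply Finset.sum_congr rfl; intro k' _
    rw [map_mul, omega_conj]
    rw [show (n : ℤ) * ((k' : ℤ) - (k : ℤ)) = (-((k:ℤ) * n)) + (-(-((k':ℤ) * n))) by ring,
      omega_zpow_add]
    ring
  simp only [expand]
  rw [Finset.sum_comm]
  have swap2 : ∀ k ∈ Finset.range N,
      ∑ n ∈ Finset.range N, ∑ k' ∈ Finset.range N,
          x k * (starRingEnd ℂ) (y k') * omegaN N ^ ((n : ℤ) * ((k' : ℤ) - (k : ℤ)))
      = ∑ k' ∈ Finset.range N, x k * (starRingEnd ℂ) (y k') *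
          ∑ n ∈ Finset.range N, omegaN N ^ ((n : ℤ) * ((k' : ℤ) - (k : ℤ))) := by
    intro k _
    rw [Finset.sum_comm]
    apply Finset.sum_congr rfl; intro k' _
    rw [Finset.mul_sum]
  rw [Finset.sum_congr rfl swap2]
  have inner : ∀ k ∈ Finset.range N, ∀ k' ∈ Finset.range N,
      ∑ n ∈ Finset.range N, omegaN N ^ ((n : ℤ) * ((k' : ℤ) - (k : ℤ)))
      = if k' = k then (N : ℂ) else 0 := by
    intro k hk k' hk'
    rw [omega_geom N hN]
    simp only [Finset.mem_range] at hk hk'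
    by_cases h : k' = k
    · simp [h]
    · have hnd : ¬ ((N : ℤ) ∣ ((k' : ℤ) - (k : ℤ))) := by
        intro hd
        have habs : |(k' : ℤ) - (k : ℤ)| < (N : ℤ) := by
          rw [abs_lt]; omega
        have := Int.eq_zero_of_abs_lt_dvd hd habs
        apply h; omega
      simp [h, hnd]
  have final : ∀ k ∈ Finset.range N,
      ∑ k' ∈ Finset.range N, x k * (starRingEnd ℂ) (y k') *
          ∑ n ∈ Finset.range N, omegaN N ^ ((n : ℤ) * ((k' : ℤ) - (k : ℤ)))
      = (N : ℂ) * (x k * (starRingEnd ℂ) (y k)) := by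
    intro k hk
    rw [Finset.sum_congr rfl (fun k' hk' => by rw [inner k hk k' hk'])]
    rw [Finset.sum_eq_single k]
    · simp [mul_comm]
    · intro b _ hb; simp [hb]
    · intro hc; exact absurd hk hc
  rw [Finset.sum_congr rfl final, ← Finset.mul_sum]
  rw [ip, ← mul_assoc, inv_mul_cancel₀ (by exact_mod_cast hN : (N : ℂ) ≠ 0), one_mul]

lemma omega_ortho (N : ℕ) (hN : N ≠ 0) (n n' : ℕ) (hn : n < N) (hn' : n' < N) :
    ∑ k ∈ Finset.range N, omegaN N ^ ((k : ℤ) * ((n' : ℤ) - (n : ℤ)))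
      = if n' = n then (N : ℂ) else 0 := by
  rw [omega_geom N hN]
  by_cases h : n' = n
  · simp [h]
  · have hnd : ¬ ((N : ℤ) ∣ ((n' : ℤ) - (n : ℤ))) := by
      intro hd
      have habs : |(n' : ℤ) - (n : ℤ)| < (N : ℤ) := by rw [abs_lt]; omega
      have := Int.eq_zero_of_abs_lt_dvd hd habs
      apply h; omega
    simp [h, hnd]

lemma HT_per (N : ℕ) (hN : N ≠ 0) (x : ℤ → ℂ) (k : ℤ) : HT N x (k + N) = HT N x k := by
  unfold HT
  congr 1
  apply Finset.sum_congr rfl; intro n _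
  rw [show (k + (N : ℤ)) * (n : ℤ) = k * n + (N : ℤ) * n by ring, omega_zpow_addN N hN]

lemma dft_HT (N : ℕ) (hN : N ≠ 0) (x : ℤ → ℂ) (n : ℕ) (hn : n < N) :
    dft N (HT N x) n =
      (if n = 0 ∨ 2 * n = N then 0 else if 2 * n < N then -Complex.I else Complex.I) *
        dft N x n := by
  set c : ℕ → ℂ :=
    fun n' => if n' = 0 ∨ 2 * n' = N then 0 else if 2 * n' < N then -Complex.I else Complex.I
    with hc
  have hHT : ∀ k : ℤ, HT N x k
      = (N : ℂ)⁻¹ * ∑ n' ∈ Finset.range N, c n' * dft N x n' * omegaN N ^ (k * (n' : ℤ)) :=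
    fun k => rfl
  rw [dft]
  simp only [hHT]
  have step : ∀ k : ℕ,
      ((N : ℂ)⁻¹ * ∑ n' ∈ Finset.range N, c n' * dft N x n' * omegaN N ^ ((k : ℤ) * (n' : ℤ)))
          * omegaN N ^ (-((k : ℤ) * (n : ℤ)))
      = (N : ℂ)⁻¹ * ∑ n' ∈ Finset.range N,
          c n' * dft N x n' * omegaN N ^ ((k : ℤ) * ((n' : ℤ) - (n : ℤ))) := by
    intro k
    rw [mul_assoc, Finset.sum_mul]
    congr 1
    apply Finset.sum_congr rfl; intro n' _
    rw [show (k : ℤ) * ((n' : ℤ) - (n : ℤ)) = (k : ℤ) * (n' : ℤ) + (-((k : ℤ) * (n : ℤ)))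
      by ring, omega_zpow_add]
    ring
  rw [Finset.sum_congr rfl (fun k _ => step k), ← Finset.mul_sum, Finset.sum_comm]
  have inner : ∀ n' ∈ Finset.range N,
      ∑ k ∈ Finset.range N, c n' * dft N x n' * omegaN N ^ ((k : ℤ) * ((n' : ℤ) - (n : ℤ)))
      = c n' * dft N x n' * (if n' = n then (N : ℂ) else 0) := by
    intro n' hn'
    rw [← Finset.mul_sum, omega_ortho N hN n n' hn (Finset.mem_range.1 hn')]
  rw [Finset.sum_congr rfl inner, Finset.sum_eq_single n]
  · rw [if_pos rfl, hc]
    have hNc : (N : ℂ) ≠ 0 := by exact_mod_cast hN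
    field_simp
  · intro b _ hb; simp [hb]
  · intro hc'; exact absurd (Finset.mem_range.2 hn) hc'

lemma ip_shift (N : ℕ) (hN : N ≠ 0) (x : ℤ → ℂ) (hx : ∀ k : ℤ, x (k + N) = x k) (a b : ℤ) :
    ip N (fun k => x (k - a)) (fun k => x (k - b))
      = (N : ℂ)⁻¹ * ∑ n ∈ Finset.range N,
          omegaN N ^ (-(a * (n : ℤ)) + b * (n : ℤ)) *
            (dft N x n * (starRingEnd ℂ) (dft N x n)) := by
  rw [parseval N hN]
  congr 1
  apply Finset.sum_congr rfl; intro n _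
  rw [dft_shift N hN x hx a n, dft_shift N hN x hx b n, map_mul, omega_conj,
    neg_neg, omega_zpow_add]
  ring

/-- If ψ is real-valued with ψ̂[0] = ψ̂[N/2] = 0 and orthonormal 2^m-sample
shifts, then the 2^m-sample shifts of θ = H(ψ) are also orthonormal. -/
theorem stmt_10 (j m : ℕ) (hj : 3 ≤ j) (hm : 1 ≤ m) (hmj : m ≤ j) (N : ℕ) (hN : N = 2 ^ j)
    (ψ : ℤ → ℂ) (hper : ∀ k : ℤ, ψ (k + N) = ψ k) (hreal : ∀ k : ℤ, (ψ k).im = 0)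
    (h0 : dft N ψ 0 = 0) (hN2 : dft N ψ ((N : ℤ) / 2) = 0)
    (horth : ∀ l p : ℕ, l < N / 2 ^ m → p < N / 2 ^ m →
      ip N (fun k => ψ (k - 2 ^ m * (l : ℤ))) (fun k => ψ (k - 2 ^ m * (p : ℤ))) =
        if l = p then 1 else 0) :
    ∀ l p : ℕ, l < N / 2 ^ m → p < N / 2 ^ m →
      ip N (fun k => HT N ψ (k - 2 ^ m * (l : ℤ))) (fun k => HT N ψ (k - 2 ^ m * (p : ℤ))) =
        if l = p then 1 else 0 := by
  have hNne : N ≠ 0 := by subst hN; positivity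
  intro l p hl hp
  have hθper : ∀ k : ℤ, HT N ψ (k + N) = HT N ψ k := HT_per N hNne ψ
  have e1 : ip N (fun k => HT N ψ (k - 2 ^ m * (l : ℤ))) (fun k => HT N ψ (k - 2 ^ m * (p : ℤ)))
      = ip N (fun k => ψ (k - 2 ^ m * (l : ℤ))) (fun k => ψ (k - 2 ^ m * (p : ℤ))) := by
    rw [ip_shift N hNne (HT N ψ) hθper (2 ^ m * (l : ℤ)) (2 ^ m * (p : ℤ)),
      ip_shift N hNne ψ hper (2 ^ m * (l : ℤ)) (2 ^ m * (p : ℤ))]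
    congr 1
    apply Finset.sum_congr rfl; intro n hn
    congr 1
    rw [dft_HT N hNne ψ n (Finset.mem_range.1 hn)]
    by_cases hz : n = 0
    · subst hz
      have h0' : dft N ψ ((0 : ℕ) : ℤ) = 0 := by rw [Nat.cast_zero]; exact h0
      rw [Nat.cast_zero] at h0' ⊢
      simp [h0]
    by_cases h2 : 2 * n = N
    · have hc : ((n : ℕ) : ℤ) = (N : ℤ) / 2 := by omega
      rw [hc, hN2]
      simp
    · rw [if_neg (by tauto)]
      by_cases hlt : 2 * n < N
      · rw [if_pos hlt]
        rw [map_mul]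
        simp only [map_neg, Complex.conj_I, neg_neg]
        ring_nf
        rw [Complex.I_sq]
        ring
      · rw [if_neg hlt]
        rw [map_mul]
        simp only [Complex.conj_I]
        ring_nf
        rw [Complex.I_sq]
        ring
  rw [e1]
  exact horth l p hl hp
end
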